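/- For all x, y ∈ ℝ with |x| ≤ 1, |y| ≤ 1 and all ρ ∈ ℝ with |ρ| < 1, one has ∑_{n=0}^{∞} ρ^n · T_n(x) · T_n(y) = (1 − ρ² + 2ρ²(x² + y²) − (ρ² + 3)ρxy) / w₂(x,y|ρ). -/

import Mathlib

open Polynomial

lemma cos_geo_hasSum (θ ρ : ℝ) (hρ : |ρ| < 1) :
    HasSum (fun n : ℕ => ρ ^ n * Real.cos (n * θ))
      ((1 - ρ * Real.cos θ) / (1 - 2 * ρ * Real.cos θ + ρ ^ 2)) := by
  set z : ℂ := (ρ : ℂ) * Complex.exp (θ * Complex.I) with hz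
  have hnorm : ‖z‖ < 1 := by
    rw [hz, norm_mul, Complex.norm_exp_ofReal_mul_I, mul_one, Complex.norm_real,
      Real.norm_eq_abs]
    exact hρ
  have h := hasSum_geometric_of_norm_lt_one hnorm
  have h2 := Complex.reCLM.hasSum h
  have hterm : ∀ n : ℕ, Complex.reCLM (z ^ n) = ρ ^ n * Real.cos (n * θ) := by
    intro n
    have : z ^ n = ((ρ ^ n : ℝ) : ℂ) * Complex.exp ((n * θ : ℝ) * Complex.I) := by
      rw [hz, mul_pow, ← Complex.exp_nat_mul]
      push_cast
      ring_nf
    simp only [Complex.reCLM_apply, this, Complex.re_ofReal_mul,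
      Complex.exp_ofReal_mul_I_re]
  have hval : Complex.reCLM (1 - z)⁻¹ =
      (1 - ρ * Real.cos θ) / (1 - 2 * ρ * Real.cos θ + ρ ^ 2) := by
    have hre : (1 - z).re = 1 - ρ * Real.cos θ := by
      simp [hz, Complex.exp_ofReal_mul_I_re]
    have him : (1 - z).im = -(ρ * Real.sin θ) := by
      simp [hz, Complex.exp_ofReal_mul_I_im]
    rw [Complex.reCLM_apply, Complex.inv_re, Complex.normSq_apply, hre, him]
    have hpy : Real.sin θ ^ 2 + Real.cos θ ^ 2 = 1 := Real.sin_sq_add_cos_sq θ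
    have : (1 - ρ * Real.cos θ) * (1 - ρ * Real.cos θ) +
        -(ρ * Real.sin θ) * -(ρ * Real.sin θ) = 1 - 2 * ρ * Real.cos θ + ρ ^ 2 := by
      nlinarith [hpy]
    rw [this]
  simpa [hterm, hval] using h2

lemma denom_pos (ρ c : ℝ) (hρ : |ρ| < 1) (hc : |c| ≤ 1) :
    0 < 1 - 2 * ρ * c + ρ ^ 2 := by
  have h3 : ρ * c ≤ |ρ| := by
    calc ρ * c ≤ |ρ * c| := le_abs_self _
    _ = |ρ| * |c| := abs_mul ρ c
    _ ≤ |ρ| * 1 := by nlinarith [abs_nonneg ρ]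
    _ = |ρ| := mul_one _
  nlinarith [sq_abs ρ, sq_nonneg (1 - |ρ|)]

theorem chebyshev_T_T_gen_fun (x y ρ : ℝ) (hx : |x| ≤ 1) (hy : |y| ≤ 1) (hρ : |ρ| < 1) :
    ∑' n : ℕ, ρ ^ n * (Chebyshev.T ℝ (n : ℤ)).eval x * (Chebyshev.T ℝ (n : ℤ)).eval y =
      (1 - ρ ^ 2 + 2 * ρ ^ 2 * (x ^ 2 + y ^ 2) - (ρ ^ 2 + 3) * ρ * x * y) /
        ((1 - ρ ^ 2) ^ 2 - 4 * x * y * ρ * (1 + ρ ^ 2) + 4 * ρ ^ 2 * (x ^ 2 + y ^ 2)) := by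
  obtain ⟨hx1, hx2⟩ := abs_le.mp hx
  obtain ⟨hy1, hy2⟩ := abs_le.mp hy
  set a := Real.arccos x with ha
  set b := Real.arccos y with hb
  have hca : Real.cos a = x := Real.cos_arccos hx1 hx2
  have hcb : Real.cos b = y := Real.cos_arccos hy1 hy2
  have h1 := cos_geo_hasSum (a + b) ρ hρ
  have h2 := cos_geo_hasSum (a - b) ρ hρ
  set c1 := Real.cos (a + b) with hc1
  set c2 := Real.cos (a - b) with hc2
  have hsum : HasSum (fun n : ℕ => ρ ^ n * (Chebyshev.T ℝ (n : ℤ)).eval x *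
      (Chebyshev.T ℝ (n : ℤ)).eval y)
      (((1 - ρ * c1) / (1 - 2 * ρ * c1 + ρ ^ 2) +
        (1 - ρ * c2) / (1 - 2 * ρ * c2 + ρ ^ 2)) / 2) := by
    have h3 := (h1.add h2).div_const 2
    convert h3 using 2 with n
    · rfl
    rw [← hca, ← hcb, Chebyshev.T_real_cos, Chebyshev.T_real_cos]
    have e1 : (n : ℝ) * (a + b) = n * a + n * b := by ring
    have e2 : (n : ℝ) * (a - b) = n * a - n * b := by ring
    rw [e1, e2, Real.cos_add, Real.cos_sub]
    push_cast
    ring_nf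
  rw [hsum.tsum_eq]
  -- algebra
  have hs2 : Real.sin a ^ 2 = 1 - x ^ 2 := by
    have := Real.sin_sq_add_cos_sq a; rw [hca] at this; linarith
  have ht2 : Real.sin b ^ 2 = 1 - y ^ 2 := by
    have := Real.sin_sq_add_cos_sq b; rw [hcb] at this; linarith
  have hc1' : c1 = x * y - Real.sin a * Real.sin b := by
    rw [hc1, Real.cos_add, hca, hcb]
  have hc2' : c2 = x * y + Real.sin a * Real.sin b := by
    rw [hc2, Real.cos_sub, hca, hcb]
  have hD1 : (0:ℝ) < 1 - 2 * ρ * c1 + ρ ^ 2 :=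
    denom_pos ρ c1 hρ (Real.abs_cos_le_one _)
  have hD2 : (0:ℝ) < 1 - 2 * ρ * c2 + ρ ^ 2 :=
    denom_pos ρ c2 hρ (Real.abs_cos_le_one _)
  have hW : (1 - ρ ^ 2) ^ 2 - 4 * x * y * ρ * (1 + ρ ^ 2) + 4 * ρ ^ 2 * (x ^ 2 + y ^ 2) =
      (1 - 2 * ρ * c1 + ρ ^ 2) * (1 - 2 * ρ * c2 + ρ ^ 2) := by
    have hst : (Real.sin a * Real.sin b) ^ 2 = (1 - x ^ 2) * (1 - y ^ 2) := by
      rw [mul_pow, hs2, ht2]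
    rw [hc1', hc2']
    linear_combination (4 * ρ ^ 2) * hst
  rw [hW]
  rw [div_add_div _ _ (ne_of_gt hD1) (ne_of_gt hD2)]
  rw [div_div]
  rw [div_eq_div_iff (by positivity) (by positivity)]
  have hst : (Real.sin a * Real.sin b) ^ 2 = (1 - x ^ 2) * (1 - y ^ 2) := by
    rw [mul_pow, hs2, ht2]
  rw [hc1', hc2']
  set s := Real.sin a * Real.sin b
  linear_combination ((-4 * ρ ^ 2) * ((1 - 2 * ρ * (x * y - s) + ρ ^ 2) *
    (1 - 2 * ρ * (x * y + s) + ρ ^ 2))) * hst
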